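/- Let f : [0,1] → ℝ be absolutely continuous with f' ∈ L¹([0,1]), extend f' by 0 to ℝ, and let M_{f'}(x) := sup_{r>0} (1/(2r)) ∫_{x−r}^{x+r} |f'(t)| dt be its Hardy–Littlewood maximal function. If M_{f'} ∈ L¹([0,1]), then for every N ≥ 1 there exists a partition of [0,1] into at most N dyadic intervals (intervals of the form 2^{−j}[n, n+1] with j ≥ 0 and 0 ≤ n < 2^j) such that the global uniform-norm piecewise-constant approximation error over this partition is at most 4 ‖M_{f'}‖_{L¹([0,1])} N^{−1}. -/

import Mathlib

open Set MeasureTheory ENNReal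

/-- Local piecewise-constant approximation error of `f` on the interval `I`
in the uniform norm: `e_{1,I}(f)_∞ = inf_c sup_{x ∈ I} |f x - c|`. -/
noncomputable def locErr (f : ℝ → ℝ) (I : Set ℝ) : ℝ :=
  ⨅ c : ℝ, ⨆ x : I, |f x.1 - c|

/-- The Hardy–Littlewood maximal function of `g`:
`M_g(x) = sup_{r>0} |B(x,r)|⁻¹ ∫_{B(x,r)} |g|`, valued in `ℝ≥0∞`. -/
noncomputable def maxFn (g : ℝ → ℝ) (x : ℝ) : ℝ≥0∞ :=
  ⨆ r : {r : ℝ // 0 < r},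
    (∫⁻ t in Set.Ioo (x - r.1) (x + r.1), ENNReal.ofReal |g t|) / ENNReal.ofReal (2 * r.1)

/-- The dyadic interval `2^{-j}[n, n+1]`. -/
noncomputable def dyadic (j n : ℕ) : Set ℝ :=
  Set.Icc ((n : ℝ) / 2 ^ j) (((n : ℝ) + 1) / 2 ^ j)

lemma dyadic_lt (j n : ℕ) : ((n:ℝ)) / 2^j < ((n:ℝ)+1) / 2^j := by
  have h2 : (0:ℝ) < 2^j := by positivity
  apply div_lt_div_of_pos_right (by linarith) h2

lemma dyadic_nonempty (j n : ℕ) : (dyadic j n).Nonempty :=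
  Set.nonempty_Icc.2 (dyadic_lt j n).le

lemma interior_dyadic (j n : ℕ) :
    interior (dyadic j n) = Set.Ioo ((n:ℝ)/2^j) (((n:ℝ)+1)/2^j) := interior_Icc

lemma dyadic_subset_unit {j n : ℕ} (h : n < 2^j) : dyadic j n ⊆ Set.Icc (0:ℝ) 1 := by
  apply Set.Icc_subset_Icc
  · positivity
  · rw [div_le_one (by positivity)]
    have : (n:ℝ) + 1 ≤ (2:ℝ)^j := by
      have := (Nat.cast_le (α := ℝ)).2 (Nat.succ_le_of_lt h)
      push_cast at this; linarith
    exact this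

lemma dyadic_subset_anc {j' j n : ℕ} (h : j' ≤ j) :
    dyadic j n ⊆ dyadic j' (n / 2^(j-j')) := by
  suffices H : ∀ k, dyadic (j'+k) n ⊆ dyadic j' (n / 2^k) by
    have hj : j = j' + (j - j') := by omega
    have he : j - j' = j' + (j - j') - j' := by omega
    rw [hj, ← he]; exact H (j - j')
  intro k
  set m := n / 2^k with hm
  have h1 : m * 2^k ≤ n := Nat.div_mul_le_self n (2^k)
  have h2 : n < (m+1) * 2^k := by
    rw [add_mul, one_mul]
    exact Nat.lt_div_mul_add (Nat.pow_pos (by norm_num))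
  apply Set.Icc_subset_Icc
  · rw [div_le_div_iff₀ (by positivity) (by positivity)]
    have : ((m * 2^k : ℕ) : ℝ) ≤ (n : ℝ) := Nat.cast_le.2 h1
    push_cast at this ⊢
    rw [pow_add]
    nlinarith [pow_pos (show (0:ℝ) < 2 by norm_num) j', pow_pos (show (0:ℝ) < 2 by norm_num) k]
  · rw [div_le_div_iff₀ (by positivity) (by positivity)]
    have : ((n+1 : ℕ) : ℝ) ≤ (((m+1) * 2^k : ℕ) : ℝ) := Nat.cast_le.2 h2
    push_cast at this ⊢
    rw [pow_add]
    nlinarith [pow_pos (show (0:ℝ) < 2 by norm_num) j', pow_pos (show (0:ℝ) < 2 by norm_num) k]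

lemma dyadic_split (j n : ℕ) :
    dyadic j n = dyadic (j+1) (2*n) ∪ dyadic (j+1) (2*n+1) := by
  unfold dyadic
  have e1 : ((2*n : ℕ) : ℝ) / 2^(j+1) = (n:ℝ)/2^j := by push_cast; rw [pow_succ]; ring
  have e2 : (((2*n : ℕ) : ℝ)+1) / 2^(j+1) = ((2*n+1 : ℕ) : ℝ)/2^(j+1) := by push_cast; ring
  have e3 : (((2*n+1 : ℕ) : ℝ)+1) / 2^(j+1) = ((n:ℝ)+1)/2^j := by push_cast; rw [pow_succ]; ring
  rw [e1, e2, e3, Set.Icc_union_Icc_eq_Icc]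
  · rw [div_le_div_iff₀ (by positivity) (by positivity)]
    push_cast
    rw [pow_succ]
    nlinarith [pow_pos (show (0:ℝ) < 2 by norm_num) j]
  · rw [div_le_div_iff₀ (by positivity) (by positivity)]
    push_cast
    rw [pow_succ]
    nlinarith [pow_pos (show (0:ℝ) < 2 by norm_num) j]

lemma dyadic_interior_disjoint_same {j m n : ℕ} (h : m ≠ n) :
    Disjoint (Set.Ioo ((m:ℝ)/2^j) (((m:ℝ)+1)/2^j)) (Set.Ioo ((n:ℝ)/2^j) (((n:ℝ)+1)/2^j)) := by
  rw [Set.disjoint_left]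
  rintro x ⟨h1, h2⟩ ⟨h3, h4⟩
  have h2j : (0:ℝ) < 2^j := by positivity
  rw [div_lt_iff₀ h2j] at h1 h3
  rw [lt_div_iff₀ h2j] at h2 h4
  rcases lt_or_gt_of_ne h with hlt | hlt
  · have : (m:ℝ) + 1 ≤ (n:ℝ) := by exact_mod_cast Nat.succ_le_of_lt hlt
    linarith
  · have : (n:ℝ) + 1 ≤ (m:ℝ) := by exact_mod_cast Nat.succ_le_of_lt hlt
    linarith

noncomputable def Einf (g : ℝ → ℝ) (j n : ℕ) : ℝ≥0∞ :=
  ENNReal.ofReal ((2^j : ℝ)⁻¹) * ⨅ x : dyadic j n, maxFn g x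

lemma lint_g_le_maxFn (g : ℝ → ℝ) (j n : ℕ) {x : ℝ} (hx : x ∈ dyadic j n) :
    (∫⁻ t in Set.Ioo ((n:ℝ)/2^j) (((n:ℝ)+1)/2^j), ENNReal.ofReal |g t|) ≤
      maxFn g x * ENNReal.ofReal (2 * (2^j : ℝ)⁻¹) := by
  set h : ℝ := (2^j : ℝ)⁻¹ with hh
  have hhpos : 0 < h := by positivity
  have hsub : Set.Ioo ((n:ℝ)/2^j) (((n:ℝ)+1)/2^j) ⊆ Set.Ioo (x - h) (x + h) := by
    obtain ⟨hx1, hx2⟩ := hx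
    have key : ((n:ℝ)+1)/2^j = (n:ℝ)/2^j + h := by rw [hh]; field_simp
    apply Set.Ioo_subset_Ioo
    · rw [key] at hx2; linarith
    · rw [key]; linarith
  have hmono : (∫⁻ t in Set.Ioo ((n:ℝ)/2^j) (((n:ℝ)+1)/2^j), ENNReal.ofReal |g t|) ≤
      ∫⁻ t in Set.Ioo (x - h) (x + h), ENNReal.ofReal |g t| :=
    lintegral_mono_set hsub
  have hle : (∫⁻ t in Set.Ioo (x - h) (x + h), ENNReal.ofReal |g t|)
      / ENNReal.ofReal (2 * h) ≤ maxFn g x :=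
    le_iSup (fun r : {r : ℝ // 0 < r} =>
      (∫⁻ t in Set.Ioo (x - r.1) (x + r.1), ENNReal.ofReal |g t|) / ENNReal.ofReal (2 * r.1))
      ⟨h, hhpos⟩
  rw [ENNReal.div_le_iff (ne_of_gt (ENNReal.ofReal_pos.2 (by positivity))) (by simp [ENNReal.mul_eq_top])] at hle
  exact hmono.trans hle

lemma Einf_le_lint (g : ℝ → ℝ) (j n : ℕ) :
    Einf g j n ≤ ∫⁻ t in Set.Ioo ((n:ℝ)/2^j) (((n:ℝ)+1)/2^j), maxFn g t := by
  set m : ℝ≥0∞ := ⨅ x : dyadic j n, maxFn g x with hm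
  have h1 : (∫⁻ t in Set.Ioo ((n:ℝ)/2^j) (((n:ℝ)+1)/2^j), (m : ℝ≥0∞)) ≤
      ∫⁻ t in Set.Ioo ((n:ℝ)/2^j) (((n:ℝ)+1)/2^j), maxFn g t := by
    apply lintegral_mono_ae
    refine (ae_restrict_iff' measurableSet_Ioo).2 (Filter.Eventually.of_forall ?_)
    intro t ht
    exact iInf_le (fun x : dyadic j n => maxFn g x) ⟨t, Set.Ioo_subset_Icc_self ht⟩
  have h2 : (∫⁻ _ in Set.Ioo ((n:ℝ)/2^j) (((n:ℝ)+1)/2^j), (m : ℝ≥0∞)) =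
      m * ENNReal.ofReal ((2^j : ℝ)⁻¹) := by
    have key : ((n:ℝ)+1)/2^j - (n:ℝ)/2^j = ((2:ℝ)^j)⁻¹ := by field_simp; ring
    rw [setLIntegral_const, Real.volume_Ioo, key]
  rw [h2] at h1
  rw [Einf, mul_comm]
  exact h1

lemma Einf_le_two_mul_child (g : ℝ → ℝ) (j n m : ℕ) (hm : m = 2*n ∨ m = 2*n+1) :
    Einf g j n ≤ 2 * Einf g (j+1) m := by
  have hsub : dyadic (j+1) m ⊆ dyadic j n := by
    rcases hm with h | h <;> rw [h, dyadic_split j n]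
    · exact Set.subset_union_left
    · exact Set.subset_union_right
  have hinf : (⨅ x : dyadic j n, maxFn g x) ≤ ⨅ x : dyadic (j+1) m, maxFn g x := by
    apply le_iInf
    rintro ⟨x, hx⟩
    exact iInf_le (fun y : dyadic j n => maxFn g y) ⟨x, hsub hx⟩
  have hfac : ENNReal.ofReal ((2^j : ℝ)⁻¹) = 2 * ENNReal.ofReal ((2^(j+1) : ℝ)⁻¹) := by
    rw [show ((2:ℝ)^j)⁻¹ = 2 * ((2:ℝ)^(j+1))⁻¹ by rw [pow_succ]; field_simp,
      ENNReal.ofReal_mul (by norm_num)]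
    norm_num
  unfold Einf
  rw [hfac, mul_assoc]
  exact mul_le_mul_right (mul_le_mul_right hinf _) 2

lemma locErr_le_lint (f g : ℝ → ℝ) (hgint : Integrable g)
    (hf : ∀ x ∈ Set.Icc (0:ℝ) 1, f x = f 0 + ∫ t in (0:ℝ)..x, g t)
    {j n : ℕ} (hn : n < 2^j) :
    ENNReal.ofReal (locErr f (dyadic j n)) ≤ 2 * Einf g j n := by
  set a : ℝ := (n:ℝ)/2^j with ha
  set b : ℝ := ((n:ℝ)+1)/2^j with hb
  have hab : a < b := dyadic_lt j n
  have hsub01 : dyadic j n ⊆ Set.Icc (0:ℝ) 1 := dyadic_subset_unit hn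
  have hamem : a ∈ dyadic j n := ⟨le_rfl, hab.le⟩
  have ha01 : a ∈ Set.Icc (0:ℝ) 1 := hsub01 hamem
  set B : ℝ := ∫ t in Set.Ioo a b, |g t| with hB
  have hBnn : 0 ≤ B := integral_nonneg (fun t => abs_nonneg _)
  -- Step 1 : locErr ≤ B
  have step1 : locErr f (dyadic j n) ≤ B := by
    have h1 : locErr f (dyadic j n) ≤ ⨆ x : dyadic j n, |f x.1 - f a| := by
      apply ciInf_le
      refine ⟨0, ?_⟩
      rintro _ ⟨c, rfl⟩
      exact Real.iSup_nonneg (fun x => abs_nonneg _)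
    refine h1.trans (Real.iSup_le (fun x => ?_) hBnn)
    obtain ⟨x, hx⟩ := x
    have hx01 : x ∈ Set.Icc (0:ℝ) 1 := hsub01 hx
    have hax : a ≤ x := hx.1
    have hdiff : f x - f a = ∫ t in a..x, g t := by
      rw [hf x hx01, hf a ha01]
      have : (f 0 + ∫ t in (0:ℝ)..x, g t) - (f 0 + ∫ t in (0:ℝ)..a, g t)
          = (∫ t in (0:ℝ)..x, g t) - (∫ t in (0:ℝ)..a, g t) := by ring
      rw [this, intervalIntegral.integral_interval_sub_left
        hgint.intervalIntegrable hgint.intervalIntegrable]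
    rw [hdiff]
    calc |∫ t in a..x, g t| ≤ ∫ t in a..x, |g t| :=
          intervalIntegral.abs_integral_le_integral_abs hax
      _ = ∫ t in Set.Ioc a x, |g t| := by
          rw [intervalIntegral.integral_of_le hax]
      _ ≤ B := by
          apply setIntegral_mono_set hgint.abs.integrableOn
          · exact Filter.Eventually.of_forall (fun t => abs_nonneg _)
          · refine (MeasureTheory.ae_le_set).2 (measure_mono_null ?_ (Real.volume_singleton (a := b)))
            intro t ⟨ht1, ht2⟩
            simp only [Set.mem_Ioo, not_and, not_lt] at ht2
            have : t ≤ b := le_trans ht1.2 hx.2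
            exact Set.mem_singleton_iff.2 (le_antisymm this (ht2 ht1.1))
  -- Step 2 : ofReal B = lintegral
  have step2 : ENNReal.ofReal B = ∫⁻ t in Set.Ioo a b, ENNReal.ofReal |g t| := by
    rw [hB, MeasureTheory.ofReal_integral_eq_lintegral_ofReal hgint.abs.integrableOn
      (Filter.Eventually.of_forall (fun t => abs_nonneg _))]
  -- Step 3 : lintegral ≤ 2 * Einf
  have step3 : (∫⁻ t in Set.Ioo a b, ENNReal.ofReal |g t|) ≤ 2 * Einf g j n := by
    set c : ℝ≥0∞ := ENNReal.ofReal (2 * ((2:ℝ)^j)⁻¹) with hc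
    have hc0 : c ≠ 0 := ne_of_gt (ENNReal.ofReal_pos.2 (by positivity))
    have hctop : c ≠ ⊤ := ENNReal.ofReal_ne_top
    have hdivle : (∫⁻ t in Set.Ioo a b, ENNReal.ofReal |g t|) / c
        ≤ ⨅ x : dyadic j n, maxFn g x := by
      apply le_iInf
      rintro ⟨x, hx⟩
      rw [ENNReal.div_le_iff hc0 hctop]
      exact lint_g_le_maxFn g j n hx
    rw [ENNReal.div_le_iff hc0 hctop] at hdivle
    refine hdivle.trans (le_of_eq ?_)
    rw [Einf, hc, show (2:ℝ) * ((2:ℝ)^j)⁻¹ = ((2:ℝ)^j)⁻¹ * 2 by ring,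
      ENNReal.ofReal_mul (by positivity)]
    rw [ENNReal.ofReal_ofNat]
    ring
  calc ENNReal.ofReal (locErr f (dyadic j n)) ≤ ENNReal.ofReal B := ENNReal.ofReal_le_ofReal step1
    _ = _ := step2
    _ ≤ _ := step3

lemma nat_child_div (k m n : ℕ) (hm : m / 2 = n) : m / 2^(k+1) = n / 2^k := by
  rw [pow_succ', ← Nat.div_div_eq_div_mul, hm]

/-- If `f` is absolutely continuous with derivative `g` supported on `[0,1]` and the
maximal function of `g` is integrable on `[0,1]`, then for every `N ≥ 1` there is a
partition of `[0,1]` into at most `N` dyadic intervals whose global uniform-norm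
piecewise-constant error is at most `4 ‖M_g‖_{L¹([0,1])} / N`. -/
theorem stmt6 (f g : ℝ → ℝ) (hgint : Integrable g)
    (hg0 : ∀ t : ℝ, t ∉ Set.Icc (0:ℝ) 1 → g t = 0)
    (hf : ∀ x ∈ Set.Icc (0:ℝ) 1, f x = f 0 + ∫ t in (0:ℝ)..x, g t)
    (hM : ∫⁻ t in Set.Icc (0:ℝ) 1, maxFn g t < ⊤) :
    ∀ N : ℕ, 1 ≤ N → ∃ M : ℕ, 1 ≤ M ∧ M ≤ N ∧ ∃ jn : Fin M → ℕ × ℕ,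
      (∀ i, (jn i).2 < 2 ^ (jn i).1) ∧
      (∀ i i', i ≠ i' →
        Disjoint (interior (dyadic (jn i).1 (jn i).2)) (interior (dyadic (jn i').1 (jn i').2))) ∧
      (⋃ i, dyadic (jn i).1 (jn i).2) = Set.Icc (0:ℝ) 1 ∧
      ∀ i, locErr f (dyadic (jn i).1 (jn i).2) ≤
        4 * (∫⁻ t in Set.Icc (0:ℝ) 1, maxFn g t).toReal / N := by
  intro N hN
  classical
  set A : ℝ≥0∞ := ∫⁻ t in Set.Icc (0:ℝ) 1, maxFn g t with hA
  have hAtop : A ≠ ⊤ := hM.ne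
  have hNne : (N : ℝ≥0∞) ≠ 0 := by exact_mod_cast (Nat.pos_of_ne_zero (by omega)).ne'
  have hNtop : (N : ℝ≥0∞) ≠ ⊤ := ENNReal.natCast_ne_top N
  have hdyadic00 : dyadic 0 0 = Set.Icc (0:ℝ) 1 := by
    unfold dyadic; norm_num
  -- ν : the lintegral of maxFn over the open dyadic interval
  set ν : ℕ × ℕ → ℝ≥0∞ := fun p =>
    ∫⁻ t in Set.Ioo ((p.2:ℝ)/2^p.1) (((p.2:ℝ)+1)/2^p.1), maxFn g t with hν
  have hν_le_A : ∀ p : ℕ × ℕ, p.2 < 2^p.1 → ν p ≤ A := by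
    intro p hp
    exact lintegral_mono_set ((Set.Ioo_subset_Icc_self).trans (dyadic_subset_unit hp))
  by_cases hA0 : A = 0
  · -- trivial case : everything is zero
    refine ⟨1, le_rfl, hN, fun _ => (0, 0), ?_, ?_, ?_, ?_⟩
    · intro i; norm_num
    · intro i i' h; exact absurd (Subsingleton.elim i i') h
    · rw [Set.iUnion_const, hdyadic00]
    · intro i
      have h1 : Einf g 0 0 ≤ ν (0, 0) := Einf_le_lint g 0 0
      have h2 : ν (0, 0) ≤ A := hν_le_A (0,0) (by norm_num)
      have h3 : ENNReal.ofReal (locErr f (dyadic 0 0)) ≤ 2 * Einf g 0 0 :=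
        locErr_le_lint f g hgint hf (by norm_num)
      have h4 : ENNReal.ofReal (locErr f (dyadic 0 0)) = 0 := by
        have := h3.trans (mul_le_mul_right (h1.trans h2) 2)
        rw [hA0, mul_zero] at this
        exact le_antisymm this (zero_le)
      have h5 : locErr f (dyadic 0 0) ≤ 0 := ENNReal.ofReal_eq_zero.1 h4
      refine h5.trans ?_
      rw [hA0]
      simp
  · -- main case
    set ε : ℝ≥0∞ := 2 * (A / N) with hε
    have hANne : A / N ≠ 0 := by
      rw [ENNReal.div_ne_zero]; exact ⟨hA0, hNtop⟩
    have hANtop : A / N ≠ ⊤ := by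
      simp [ENNReal.div_eq_top, hAtop, hNne]
    have hεne : ε ≠ 0 := by
      simp [hε, hANne]
    have hεtop : ε ≠ ⊤ := by
      simp [hε, ENNReal.mul_eq_top, hANtop]
    -- absolute continuity : choose δ then level J
    have hfin : (∫⁻ x, maxFn g x ∂(volume.restrict (Set.Icc (0:ℝ) 1))) ≠ ⊤ := hAtop
    obtain ⟨δ, hδ0, hδ⟩ := exists_pos_setLIntegral_lt_of_measure_lt hfin hεne
    obtain ⟨J, hJlt⟩ : ∃ J : ℕ, ENNReal.ofReal ((2^J : ℝ)⁻¹) < δ := by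
      obtain ⟨J, hJ⟩ := ENNReal.exists_inv_two_pow_lt hδ0.ne'
      refine ⟨J, ?_⟩
      convert hJ using 1
      rw [show ((2:ℝ)^J)⁻¹ = ((1:ℝ)/2)^J by rw [one_div, inv_pow],
        ENNReal.ofReal_pow (by norm_num)]
      congr 1
      rw [one_div, ENNReal.ofReal_inv_of_pos (by norm_num)]
      norm_num
    -- at level J every dyadic piece has small ν
    have hJ : ∀ n : ℕ, n < 2^J → ν (J, n) < ε := by
      intro n hn
      have hsub : Set.Ioo ((n:ℝ)/2^J) (((n:ℝ)+1)/2^J) ⊆ Set.Icc (0:ℝ) 1 :=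
        Set.Ioo_subset_Icc_self.trans (dyadic_subset_unit hn)
      have hres : ν (J, n) = ∫⁻ x in Set.Ioo ((n:ℝ)/2^J) (((n:ℝ)+1)/2^J),
          maxFn g x ∂(volume.restrict (Set.Icc (0:ℝ) 1)) := by
        rw [Measure.restrict_restrict measurableSet_Ioo, Set.inter_eq_self_of_subset_left hsub]
      have hmeas : (volume.restrict (Set.Icc (0:ℝ) 1)) (Set.Ioo ((n:ℝ)/2^J) (((n:ℝ)+1)/2^J)) < δ := by
        refine lt_of_le_of_lt (le_trans (Measure.restrict_apply_le _ _) ?_) hJlt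
        rw [Real.volume_Ioo, show ((n:ℝ)+1)/2^J - (n:ℝ)/2^J = ((2:ℝ)^J)⁻¹ by (field_simp; ring)]
      rw [hres]
      exact hδ _ hmeas
    have hJE : ∀ n : ℕ, n < 2^J → Einf g J n ≤ ε :=
      fun n hn => (Einf_le_lint g J n).trans (hJ n hn).le
    -- the set of leaves
    set IsLeaf : ℕ × ℕ → Prop := fun p =>
      Einf g p.1 p.2 ≤ ε ∧ ∀ j' < p.1, ε < Einf g j' (p.2 / 2^(p.1 - j')) with hIsLeaf
    set S : Finset (ℕ × ℕ) :=
      ((Finset.range (J+1)) ×ˢ (Finset.range (2^J))).filter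
        (fun p => p.2 < 2^p.1 ∧ IsLeaf p) with hS
    have hS_mem : ∀ p : ℕ × ℕ, p ∈ S ↔ (p.1 < J + 1 ∧ p.2 < 2^J) ∧ p.2 < 2^p.1 ∧ IsLeaf p := by
      intro p
      rw [hS, Finset.mem_filter, Finset.mem_product, Finset.mem_range, Finset.mem_range]
    -- a leaf with valid bounds is in S
    have hS_mem' : ∀ j n : ℕ, j ≤ J → n < 2^j → IsLeaf (j, n) → (j, n) ∈ S := by
      intro j n hj hn hl
      rw [hS_mem]
      exact ⟨⟨by omega, lt_of_lt_of_le hn (Nat.pow_le_pow_right (by norm_num) hj)⟩, hn, hl⟩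
    -- the covering lemma
    have cover : ∀ d j n, J = j + d → n < 2^j →
        (∀ j' < j, ε < Einf g j' (n / 2^(j - j'))) →
        dyadic j n ⊆ ⋃ p ∈ S, dyadic p.1 p.2 := by
      intro d
      induction d with
      | zero =>
        intro j n hJd hn hanc
        have hj : j = J := by omega
        subst hj
        exact Set.subset_biUnion_of_mem (u := fun p => dyadic p.1 p.2) (hS_mem' j n le_rfl hn ⟨hJE n hn, hanc⟩)
      | succ d ih =>
        intro j n hJd hn hanc
        by_cases hle : Einf g j n ≤ ε
        · exact Set.subset_biUnion_of_mem (u := fun p => dyadic p.1 p.2) (hS_mem' j n (by omega) hn ⟨hle, hanc⟩)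
        · push_neg at hle
          have h2j : (2:ℕ)^(j+1) = 2 * 2^j := by rw [pow_succ]; ring
          have hanc' : ∀ m : ℕ, m / 2 = n →
              (∀ j' < j + 1, ε < Einf g j' (m / 2^(j + 1 - j'))) := by
            intro m hm j' hj'
            rcases Nat.lt_succ_iff_lt_or_eq.1 hj' with h | h
            · have : j + 1 - j' = (j - j') + 1 := by omega
              rw [this, nat_child_div _ _ _ hm]
              exact hanc j' h
            · subst h
              rw [show j' + 1 - j' = 1 by omega, pow_one, hm]
              exact hle
          rw [dyadic_split j n]
          apply Set.union_subset
          · exact ih (j+1) (2*n) (by omega) (by omega)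
              (hanc' (2*n) (by omega))
          · exact ih (j+1) (2*n+1) (by omega) (by omega)
              (hanc' (2*n+1) (by omega))
    -- pairwise disjointness of the open leaves
    have key : ∀ p ∈ S, ∀ q ∈ S, p ≠ q → p.1 ≤ q.1 →
        Disjoint (Set.Ioo ((p.2:ℝ)/2^p.1) (((p.2:ℝ)+1)/2^p.1))
          (Set.Ioo ((q.2:ℝ)/2^q.1) (((q.2:ℝ)+1)/2^q.1)) := by
      intro p hp q hq hne hle
      obtain ⟨_, hnp, hlp⟩ := (hS_mem p).1 hp
      obtain ⟨_, hnq, hlq⟩ := (hS_mem q).1 hq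
      set m := q.2 / 2^(q.1 - p.1) with hmdef
      by_cases hm : m = p.2
      · exfalso
        rcases eq_or_lt_of_le hle with h | h
        · apply hne
          have : q.1 - p.1 = 0 := by omega
          rw [this, pow_zero, Nat.div_one] at hmdef
          exact Prod.ext h (by rw [← hm, hmdef])
        · exact absurd hlp.1 (not_le.2 (hm ▸ hlq.2 p.1 h))
      · have hsub : Set.Ioo ((q.2:ℝ)/2^q.1) (((q.2:ℝ)+1)/2^q.1) ⊆
            Set.Ioo ((m:ℝ)/2^p.1) (((m:ℝ)+1)/2^p.1) := by
          rw [← interior_dyadic, ← interior_dyadic]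
          exact interior_mono (dyadic_subset_anc hle)
        exact (dyadic_interior_disjoint_same (fun h => hm h.symm)).mono_right hsub
    have hdisjIoo : ∀ p ∈ S, ∀ q ∈ S, p ≠ q →
        Disjoint (Set.Ioo ((p.2:ℝ)/2^p.1) (((p.2:ℝ)+1)/2^p.1))
          (Set.Ioo ((q.2:ℝ)/2^q.1) (((q.2:ℝ)+1)/2^q.1)) := by
      intro p hp q hq hne
      rcases le_total p.1 q.1 with h | h
      · exact key p hp q hq hne h
      · exact (key q hq p hp (Ne.symm hne) h).symm
    -- sum of leaf masses is at most A
    have hsum : (∑ p ∈ S, ν p) ≤ A := by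
      have heq := lintegral_biUnion_finset (μ := volume) (s := S)
        (t := fun p : ℕ × ℕ => Set.Ioo ((p.2:ℝ)/2^p.1) (((p.2:ℝ)+1)/2^p.1))
        (fun p hp q hq hne => hdisjIoo p (Finset.mem_coe.1 hp) q (Finset.mem_coe.1 hq) hne)
        (fun p _ => measurableSet_Ioo) (maxFn g)
      rw [← heq]
      apply lintegral_mono_set
      apply Set.iUnion₂_subset
      intro p hp
      exact Set.Ioo_subset_Icc_self.trans (dyadic_subset_unit ((hS_mem p).1 hp).2.1)
    -- nonemptiness of S
    have hS_ne : S.Nonempty := by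
      have h0 : (0:ℝ) ∈ dyadic 0 0 := by rw [hdyadic00]; exact ⟨le_rfl, by norm_num⟩
      have := cover J 0 0 (by omega) (by norm_num) (by omega) h0
      rw [Set.mem_iUnion₂] at this
      obtain ⟨p, hp, _⟩ := this
      exact ⟨p, hp⟩
    -- cardinality bound
    have hcard : S.card ≤ N := by
      by_cases hroot : (0, 0) ∈ S
      · have hsingle : S = {(0, 0)} := by
          apply Finset.eq_singleton_iff_unique_mem.2
          refine ⟨hroot, fun p hp => ?_⟩
          obtain ⟨_, hnp, hlp⟩ := (hS_mem p).1 hp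
          by_cases h1 : p.1 = 0
          · have : p.2 = 0 := by rw [h1] at hnp; omega
            exact Prod.ext h1 this
          · exfalso
            have h2 : ε < Einf g 0 (p.2 / 2^(p.1 - 0)) := hlp.2 0 (by omega)
            rw [Nat.sub_zero, Nat.div_eq_of_lt hnp] at h2
            exact absurd ((hS_mem (0,0)).1 hroot).2.2.1 (not_le.2 h2)
        rw [hsingle]; simpa using hN
      · -- every leaf has mass greater than A/N
        have hν_gt : ∀ p ∈ S, A / N < ν p := by
          intro p hp
          obtain ⟨_, hnp, hlp⟩ := (hS_mem p).1 hp
          have hp1 : p.1 ≠ 0 := by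
            intro h1
            apply hroot
            have h2 : p.2 = 0 := by rw [h1] at hnp; omega
            have hp00 : p = ((0:ℕ), (0:ℕ)) := Prod.ext h1 h2
            exact hp00 ▸ hp
          have hlt : ε < Einf g (p.1 - 1) (p.2 / 2) := by
            have h2 := hlp.2 (p.1 - 1) (by omega)
            rwa [show p.1 - (p.1 - 1) = 1 by omega, pow_one] at h2
          have hchild : Einf g (p.1 - 1) (p.2 / 2) ≤ 2 * Einf g p.1 p.2 := by
            have := Einf_le_two_mul_child g (p.1 - 1) (p.2 / 2) p.2 (by omega)
            rwa [show p.1 - 1 + 1 = p.1 by omega] at this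
          have hcv : Einf g p.1 p.2 ≤ ν p := Einf_le_lint g p.1 p.2
          have h2lt : 2 * (A / N) < 2 * ν p :=
            lt_of_lt_of_le (lt_of_lt_of_le hlt hchild) (mul_le_mul_right hcv 2)
          exact (ENNReal.mul_lt_mul_iff_right (by norm_num) (by norm_num)).1 h2lt
        have hcards : (S.card : ℝ≥0∞) * (A / N) ≤ A := by
          calc (S.card : ℝ≥0∞) * (A / N) = S.card • (A / N) := by rw [nsmul_eq_mul]
            _ ≤ ∑ p ∈ S, ν p := Finset.card_nsmul_le_sum S ν (A / N)
                (fun p hp => (hν_gt p hp).le)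
            _ ≤ A := hsum
        have hNA : (N : ℝ≥0∞) * (A / N) = A := ENNReal.mul_div_cancel hNne hNtop
        have := (ENNReal.mul_le_mul_iff_left hANne hANtop).1 (hcards.trans_eq hNA.symm)
        exact_mod_cast this
    -- final assembly
    refine ⟨S.card, Finset.card_pos.2 hS_ne, hcard,
      fun i => (S.equivFin.symm i).1, ?_, ?_, ?_, ?_⟩
    · intro i
      exact ((hS_mem _).1 (S.equivFin.symm i).2).2.1
    · intro i i' hne
      have hpe : (S.equivFin.symm i).1 ≠ (S.equivFin.symm i').1 := by
        intro h
        exact hne (S.equivFin.symm.injective (Subtype.ext h))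
      rw [interior_dyadic, interior_dyadic]
      exact hdisjIoo _ (S.equivFin.symm i).2 _ (S.equivFin.symm i').2 hpe
    · apply Set.Subset.antisymm
      · apply Set.iUnion_subset
        intro i
        exact dyadic_subset_unit ((hS_mem _).1 (S.equivFin.symm i).2).2.1
      · intro x hx
        have hx0 : x ∈ dyadic 0 0 := by rw [hdyadic00]; exact hx
        have hcov := cover J 0 0 (by omega) (by norm_num) (by omega) hx0
        rw [Set.mem_iUnion₂] at hcov
        obtain ⟨p, hp, hxp⟩ := hcov
        refine Set.mem_iUnion.2 ⟨S.equivFin ⟨p, hp⟩, ?_⟩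
        simp only [Equiv.symm_apply_apply]
        exact hxp
    · intro i
      set p : ℕ × ℕ := (S.equivFin.symm i).1 with hp
      obtain ⟨_, hnp, hlp⟩ := (hS_mem p).1 (S.equivFin.symm i).2
      have hub : ENNReal.ofReal (locErr f (dyadic p.1 p.2)) ≤ 4 * (A / N) := by
        calc ENNReal.ofReal (locErr f (dyadic p.1 p.2)) ≤ 2 * Einf g p.1 p.2 :=
              locErr_le_lint f g hgint hf hnp
          _ ≤ 2 * ε := mul_le_mul_right hlp.1 2
          _ = 4 * (A / N) := by rw [hε, ← mul_assoc]; norm_num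
      have h4top : (4:ℝ≥0∞) * (A / N) ≠ ⊤ := by
        simp [ENNReal.mul_eq_top, hANtop]
      have hle2 := (ENNReal.ofReal_le_iff_le_toReal h4top).1 hub
      refine hle2.trans (le_of_eq ?_)
      rw [ENNReal.toReal_mul, ENNReal.toReal_div, ENNReal.toReal_ofNat,
        ENNReal.toReal_natCast]
      ring
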